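/- Let A, B be finite posets of the same cardinality n with A ≇ B, and suppose there exists a finite poset Ẽ of minimal cardinality such that the set of isomorphism classes of n-element downward-closed subsets of Ẽ is exactly {[A], [B]}. If Ẽ equals the union of a downward-closed copy of A and a downward-closed copy of B, then these two copies intersect in a common downward-closed subset of cardinality n−1; in particular A and B share a common stem of cardinality n−1. -/

import Mathlib

/-- `E` is a certificate of the doublet `{A, B}`: the isomorphism classes of
its `n`-element downward-closed subsets are exactly `{[A], [B]}`. -/
def IsDoubletCert (A B E : Type) [PartialOrder A] [Fintype A]
    [PartialOrder B] [Fintype B] [PartialOrder E] [Fintype E] (n : ℕ) : Prop :=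
  (∀ S : Set E, IsLowerSet S → S.ncard = n →
    Nonempty (S ≃o A) ∨ Nonempty (S ≃o B)) ∧
  (∃ S : Set E, IsLowerSet S ∧ S.ncard = n ∧ Nonempty (S ≃o A)) ∧
  (∃ S : Set E, IsLowerSet S ∧ S.ncard = n ∧ Nonempty (S ≃o B))

open Set

/-- Image under an order embedding, as an order iso onto the image. -/
noncomputable def embImageIso {α β : Type*} [Preorder α] [Preorder β]
    (f : α ↪o β) (s : Set α) : s ≃o (⇑f '' s) where
  toEquiv := Equiv.Set.image f s f.injective
  map_rel_iff' := by
    intro a b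
    simp only [Equiv.Set.image, Equiv.Set.imageOfInjOn, Equiv.coe_fn_mk,
      Subtype.mk_le_mk]
    exact f.le_iff_le

lemma lower_val_image {E : Type*} [PartialOrder E] {V : Set E} (hV : IsLowerSet V)
    {U : Set ↥V} (hU : IsLowerSet U) : IsLowerSet (Subtype.val '' U) := by
  intro a b hba ha
  obtain ⟨u, hu, rfl⟩ := ha
  have hbV : b ∈ V := hV hba u.2
  exact ⟨⟨b, hbV⟩, hU (show (⟨b, hbV⟩ : ↥V) ≤ u from hba) hu, rfl⟩

lemma exists_lower_ncard {E : Type*} [PartialOrder E] [Fintype E] :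
    ∀ m, m ≤ Fintype.card E → ∃ S : Set E, IsLowerSet S ∧ S.ncard = m := by
  intro m
  induction m with
  | zero => exact fun _ => ⟨∅, (fun _ _ _ h => h.elim), Set.ncard_empty E⟩
  | succ m ih =>
    intro hm
    obtain ⟨S, hS, hcard⟩ := ih (le_trans (Nat.le_succ m) hm)
    have hne : Sᶜ.Nonempty := by
      rw [Set.nonempty_compl]
      intro h
      rw [h, Set.ncard_univ, Nat.card_eq_fintype_card] at hcard
      omega
    obtain ⟨z, hz, hzmin⟩ : ∃ m ∈ Sᶜ.toFinite.toFinset, ∀ x ∈ Sᶜ.toFinite.toFinset, ¬ x < m := by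
      obtain ⟨m, hm⟩ := Finset.exists_minimal (s := Sᶜ.toFinite.toFinset)
        (by simpa [Set.Finite.toFinset_nonempty] using hne)
      exact ⟨m, hm.1, fun x hx hlt => hm.not_lt hx hlt⟩
    rw [Set.Finite.mem_toFinset] at hz
    refine ⟨insert z S, ?_, ?_⟩
    · intro a b hba ha
      rcases ha with rfl | haS
      · by_cases hbS : b ∈ S
        · exact Set.mem_insert_of_mem _ hbS
        · have hnlt : ¬ b < a := hzmin b (Set.Finite.mem_toFinset _ |>.2 hbS)
          have hba' : b = a := (lt_or_eq_of_le hba).resolve_left hnlt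
          exact hba' ▸ Set.mem_insert _ _
      · exact Set.mem_insert_of_mem _ (hS hba haS)
    · rw [Set.ncard_insert_of_notMem (by simpa using hz), hcard]

lemma stem_up {A : Type} [PartialOrder A] {E : Type} [PartialOrder E]
    {V : Set E} {S : Set E} (hS : IsLowerSet S) (hSV : S ⊆ V)
    (hSn : S.ncard = n) (f : ↥S ≃o A) :
    ∃ U : Set ↥V, IsLowerSet U ∧ U.ncard = n ∧ Nonempty (↥U ≃o A) := by
  have himg : Subtype.val '' (Subtype.val ⁻¹' S : Set ↥V) = S := by
    rw [Subtype.image_preimage_coe]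
    exact Set.inter_eq_self_of_subset_right hSV
  refine ⟨Subtype.val ⁻¹' S, ?_, ?_, ?_⟩
  · intro a b hba h
    exact hS (Subtype.coe_le_coe.2 hba) h
  · rw [← Set.ncard_image_of_injective _ Subtype.val_injective, himg, hSn]
  · exact ⟨((embImageIso (OrderEmbedding.subtype _) _).trans
      (OrderIso.setCongr _ _ himg)).trans f⟩

lemma cert_subtype {A B E : Type} [PartialOrder A] [Fintype A] [PartialOrder B] [Fintype B]
    [PartialOrder E] [Fintype E] {n : ℕ}
    (hall : ∀ S : Set E, IsLowerSet S → S.ncard = n → Nonempty (↥S ≃o A) ∨ Nonempty (↥S ≃o B))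
    {V : Set E} (hV : IsLowerSet V) [Fintype ↥V]
    (hA : ∃ S : Set E, IsLowerSet S ∧ S ⊆ V ∧ S.ncard = n ∧ Nonempty (↥S ≃o A))
    (hB : ∃ S : Set E, IsLowerSet S ∧ S ⊆ V ∧ S.ncard = n ∧ Nonempty (↥S ≃o B)) :
    IsDoubletCert A B ↥V n := by
  refine ⟨?_, ?_, ?_⟩
  · intro U hU hUn
    have h1 : IsLowerSet (Subtype.val '' U) := lower_val_image hV hU
    have h2 : (Subtype.val '' U).ncard = n := by
      rw [Set.ncard_image_of_injective _ Subtype.val_injective]; exact hUn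
    have iso : ↥U ≃o ↥(Subtype.val '' U) := embImageIso (OrderEmbedding.subtype _) U
    rcases hall _ h1 h2 with hf | hf
    · exact Or.inl ⟨iso.trans hf.some⟩
    · exact Or.inr ⟨iso.trans hf.some⟩
  · obtain ⟨S, hS, hSV, hSn, ⟨f⟩⟩ := hA
    exact stem_up hS hSV hSn f
  · obtain ⟨S, hS, hSV, hSn, ⟨f⟩⟩ := hB
    exact stem_up hS hSV hSn f

lemma isLowerSet_orderIso_image {α β : Type*} [Preorder α] [Preorder β]
    (e : α ≃o β) {s : Set α} (hs : IsLowerSet s) : IsLowerSet (⇑e '' s) := by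
  intro a b hba ha
  obtain ⟨u, hu, rfl⟩ := ha
  refine ⟨e.symm b, hs ?_ hu, by simp⟩
  simpa using e.symm.monotone hba

/-- If `Ẽ` is a minimal-cardinality certificate of the doublet `{A, B}`
(`A ≇ B`, both of cardinality `n`) and `Ẽ` is the union of downward-closed
copies of `A` and `B`, then these copies meet in a downward-closed subset of
cardinality `n - 1`; in particular `A` and `B` share an `(n-1)`-stem. -/
theorem doublet_certificate_common_stem
    {A B E : Type} [PartialOrder A] [Fintype A] [PartialOrder B] [Fintype B]
    [PartialOrder E] [Fintype E] (n : ℕ)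
    (hcA : Fintype.card A = n) (hcB : Fintype.card B = n)
    (hAB : IsEmpty (A ≃o B))
    (hcert : IsDoubletCert A B E n)
    (hmin : ∀ (E' : Type) [PartialOrder E'] [Fintype E'],
      IsDoubletCert A B E' n → Fintype.card E ≤ Fintype.card E')
    (SA SB : Set E) (hSA : IsLowerSet SA) (hSB : IsLowerSet SB)
    (hiA : Nonempty (SA ≃o A)) (hiB : Nonempty (SB ≃o B))
    (hunion : SA ∪ SB = Set.univ) :
    (SA ∩ SB).ncard = n - 1 ∧
    ∃ (TA : Set A) (TB : Set B), IsLowerSet TA ∧ IsLowerSet TB ∧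
      TA.ncard = n - 1 ∧ TB.ncard = n - 1 ∧ Nonempty (TA ≃o TB) := by
  classical
  obtain ⟨fA⟩ := hiA
  obtain ⟨fB⟩ := hiB
  have hnA : SA.ncard = n := by
    rw [← Nat.card_coe_set_eq, Nat.card_congr fA.toEquiv, Nat.card_eq_fintype_card, hcA]
  have hnB : SB.ncard = n := by
    rw [← Nat.card_coe_set_eq, Nat.card_congr fB.toEquiv, Nat.card_eq_fintype_card, hcB]
  set k := (SA ∩ SB).ncard with hk_def
  have hE : Fintype.card E + k = n + n := by
    have h := Set.ncard_union_add_ncard_inter SA SB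
    rw [hunion, Set.ncard_univ, Nat.card_eq_fintype_card, hnA, hnB] at h
    exact h
  have hk_le : k ≤ n := by
    rw [hk_def, ← hnA]
    exact Set.ncard_le_ncard Set.inter_subset_left (Set.toFinite _)
  have hkne : k ≠ n := by
    intro h
    have h1 : SA ∩ SB = SA := Set.eq_of_subset_of_ncard_le Set.inter_subset_left
      (by rw [hnA, ← hk_def, h])
    have h2 : SA ∩ SB = SB := Set.eq_of_subset_of_ncard_le Set.inter_subset_right
      (by rw [hnB, ← hk_def, h])
    have hAB' : SA = SB := h1 ▸ h2
    exact hAB.false (fA.symm.trans ((OrderIso.setCongr SA SB hAB').trans fB))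
  -- the key step: the intersection cannot be smaller than n - 1
  have hmain : ¬ (k + 2 ≤ n) := by
    intro h2
    have hAne : (SA \ SB).Nonempty := by
      rw [Set.diff_nonempty]
      intro hsub
      exact hkne (by rw [hk_def, Set.inter_eq_self_of_subset_left hsub, hnA])
    have hBne : (SB \ SA).Nonempty := by
      rw [Set.diff_nonempty]
      intro hsub
      exact hkne (by rw [hk_def, Set.inter_eq_self_of_subset_right hsub, hnB])
    obtain ⟨x, hx, hxmax⟩ : ∃ m ∈ (SA \ SB).toFinite.toFinset,
        ∀ x ∈ (SA \ SB).toFinite.toFinset, ¬ m < x := by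
      obtain ⟨m, hm⟩ := Finset.exists_maximal (s := (SA \ SB).toFinite.toFinset)
        ((Set.Finite.toFinset_nonempty _).2 hAne)
      exact ⟨m, hm.1, fun x hx hlt => hm.not_gt hx hlt⟩
    rw [Set.Finite.mem_toFinset] at hx
    obtain ⟨y, hy, hymax⟩ : ∃ m ∈ (SB \ SA).toFinite.toFinset,
        ∀ x ∈ (SB \ SA).toFinite.toFinset, ¬ m < x := by
      obtain ⟨m, hm⟩ := Finset.exists_maximal (s := (SB \ SA).toFinite.toFinset)
        ((Set.Finite.toFinset_nonempty _).2 hBne)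
      exact ⟨m, hm.1, fun x hx hlt => hm.not_gt hx hlt⟩
    rw [Set.Finite.mem_toFinset] at hy
    have hxmaxE : ∀ w, x ≤ w → w = x := by
      intro w hw
      by_contra hne
      have hlt : x < w := lt_of_le_of_ne hw (fun h => hne h.symm)
      by_cases hwB : w ∈ SB
      · exact hx.2 (hSB hw hwB)
      · have hwA : w ∈ SA := by
          have := hunion ▸ Set.mem_univ w
          rcases this with h | h
          · exact h
          · exact absurd h hwB
        exact hxmax w ((Set.Finite.mem_toFinset _).2 ⟨hwA, hwB⟩) hlt
    have hymaxE : ∀ w, y ≤ w → w = y := by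
      intro w hw
      by_contra hne
      have hlt : y < w := lt_of_le_of_ne hw (fun h => hne h.symm)
      by_cases hwA : w ∈ SA
      · exact hy.2 (hSA hw hwA)
      · have hwB : w ∈ SB := by
          have := hunion ▸ Set.mem_univ w
          rcases this with h | h
          · exact absurd h hwA
          · exact h
        exact hymax w ((Set.Finite.mem_toFinset _).2 ⟨hwB, hwA⟩) hlt
    have hxy : x ≠ y := fun h => hy.2 (h ▸ hx.1)
    -- the contradiction machine: no maximal element can avoid both an A-stem and a B-stem
    have hcontra : ∀ z : E, (∀ w, z ≤ w → w = z) →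
        (∃ S : Set E, IsLowerSet S ∧ S ⊆ ({z}ᶜ : Set E) ∧ S.ncard = n ∧ Nonempty (↥S ≃o A)) →
        (∃ S : Set E, IsLowerSet S ∧ S ⊆ ({z}ᶜ : Set E) ∧ S.ncard = n ∧ Nonempty (↥S ≃o B)) →
        False := by
      intro z hz hA' hB'
      have hVz : IsLowerSet ({z}ᶜ : Set E) := by
        intro a b hba ha hb
        rw [Set.mem_singleton_iff] at hb
        subst hb
        exact ha (Set.mem_singleton_iff.2 (hz a hba))
      letI : Fintype ↥({z}ᶜ : Set E) := Fintype.ofFinite _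
      have hc := cert_subtype hcert.1 hVz hA' hB'
      have hle := hmin _ hc
      have h1 : Fintype.card ↥({z}ᶜ : Set E) = Fintype.card E - 1 := by
        rw [← Nat.card_eq_fintype_card, Nat.card_coe_set_eq, Set.compl_eq_univ_diff,
          Set.ncard_diff_singleton_of_mem (Set.mem_univ z), Set.ncard_univ,
          Nat.card_eq_fintype_card]
      have hpos : 0 < Fintype.card E := Fintype.card_pos_iff.2 ⟨z⟩
      omega
    -- find an n-stem avoiding both x and y
    have hV2 : IsLowerSet ({x, y}ᶜ : Set E) := by
      intro a b hba ha hb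
      rcases hb with rfl | hb
      · exact ha (by rw [hxmaxE a hba]; exact Set.mem_insert _ _)
      · rw [Set.mem_singleton_iff] at hb
        subst hb
        exact ha (by rw [hymaxE a hba]; exact Set.mem_insert_of_mem _ rfl)
    letI : Fintype ↥({x, y}ᶜ : Set E) := Fintype.ofFinite _
    have hV2card : Fintype.card ↥({x, y}ᶜ : Set E) = Fintype.card E - 2 := by
      rw [← Nat.card_eq_fintype_card, Nat.card_coe_set_eq, Set.compl_eq_univ_diff,
        Set.ncard_diff (Set.subset_univ _), Set.ncard_univ, Nat.card_eq_fintype_card,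
        Set.ncard_pair hxy]
    obtain ⟨W0, hW0, hW0n⟩ := exists_lower_ncard (E := ↥({x, y}ᶜ : Set E)) n (by omega)
    have hW : IsLowerSet (Subtype.val '' W0) := lower_val_image hV2 hW0
    have hWn : (Subtype.val '' W0).ncard = n := by
      rw [Set.ncard_image_of_injective _ Subtype.val_injective]; exact hW0n
    have hWsub : Subtype.val '' W0 ⊆ ({x, y}ᶜ : Set E) := by
      rintro e ⟨u, _, rfl⟩; exact u.2
    have hsubx : Subtype.val '' W0 ⊆ ({x}ᶜ : Set E) :=
      hWsub.trans (Set.compl_subset_compl.2 (by simp))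
    have hsuby : Subtype.val '' W0 ⊆ ({y}ᶜ : Set E) :=
      hWsub.trans (Set.compl_subset_compl.2 (by simp))
    have hSBx : SB ⊆ ({x}ᶜ : Set E) := by
      intro e he
      simp only [Set.mem_compl_iff, Set.mem_singleton_iff]
      rintro rfl
      exact hx.2 he
    have hSAy : SA ⊆ ({y}ᶜ : Set E) := by
      intro e he
      simp only [Set.mem_compl_iff, Set.mem_singleton_iff]
      rintro rfl
      exact hy.2 he
    rcases hcert.1 _ hW hWn with hiso | hiso
    · exact hcontra x hxmaxE ⟨_, hW, hsubx, hWn, hiso⟩ ⟨SB, hSB, hSBx, hnB, ⟨fB⟩⟩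
    · exact hcontra y hymaxE ⟨SA, hSA, hSAy, hnA, ⟨fA⟩⟩ ⟨_, hW, hsuby, hWn, hiso⟩
  have hk : k = n - 1 := by omega
  refine ⟨hk, ?_⟩
  -- build the shared (n-1)-stems inside A and B
  set IA : Set ↥SA := {a : ↥SA | ↑a ∈ SB} with hIA_def
  set IB : Set ↥SB := {b : ↥SB | ↑b ∈ SA} with hIB_def
  have hvalIA : Subtype.val '' IA = SA ∩ SB := by
    ext e
    constructor
    · rintro ⟨u, hu, rfl⟩; exact ⟨u.2, hu⟩
    · rintro ⟨h1, h2⟩; exact ⟨⟨e, h1⟩, h2, rfl⟩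
  have hvalIB : Subtype.val '' IB = SA ∩ SB := by
    ext e
    constructor
    · rintro ⟨u, hu, rfl⟩; exact ⟨hu, u.2⟩
    · rintro ⟨h1, h2⟩; exact ⟨⟨e, h2⟩, h1, rfl⟩
  have hIAlower : IsLowerSet IA := fun a b hba ha => hSB (Subtype.coe_le_coe.2 hba) ha
  have hIBlower : IsLowerSet IB := fun a b hba ha => hSA (Subtype.coe_le_coe.2 hba) ha
  have hIAcard : IA.ncard = n - 1 := by
    rw [← Set.ncard_image_of_injective IA Subtype.val_injective, hvalIA, ← hk_def, hk]
  have hIBcard : IB.ncard = n - 1 := by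
    rw [← Set.ncard_image_of_injective IB Subtype.val_injective, hvalIB, ← hk_def, hk]
  have isoIA : ↥IA ≃o ↥(SA ∩ SB) :=
    (embImageIso (OrderEmbedding.subtype _) IA).trans (OrderIso.setCongr _ _ hvalIA)
  have isoIB : ↥IB ≃o ↥(SA ∩ SB) :=
    (embImageIso (OrderEmbedding.subtype _) IB).trans (OrderIso.setCongr _ _ hvalIB)
  refine ⟨⇑fA '' IA, ⇑fB '' IB, isLowerSet_orderIso_image fA hIAlower,
    isLowerSet_orderIso_image fB hIBlower, ?_, ?_, ?_⟩
  · rw [Set.ncard_image_of_injective _ fA.injective]; exact hIAcard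
  · rw [Set.ncard_image_of_injective _ fB.injective]; exact hIBcard
  · exact ⟨((embImageIso fA.toOrderEmbedding IA).symm.trans isoIA).trans
      (isoIB.symm.trans (embImageIso fB.toOrderEmbedding IB))⟩
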